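/- Any mapping c that is an α-approximate core-set function for k-directional height is an α^{2k}-composable core-set for determinant maximization: for any collection P₁,...,P_m ⊂ ℝ^d, MAXDET_k(⋃ c(P_i)) ≥ MAXDET_k(⋃ P_i)/α^{2k}. -/

import Mathlib

abbrev Pt (d : ℕ) := EuclideanSpace ℝ (Fin d)

noncomputable def gramDet {d k : ℕ} (v : Fin k → Pt d) : ℝ :=
  Matrix.det (Matrix.of fun i j => (inner ℝ (v i) (v j) : ℝ))

noncomputable def maxdet {d : ℕ} (k : ℕ) (Q : Set (Pt d)) : ℝ :=
  sSup {x | ∃ S : Fin k → Pt d, Function.Injective S ∧ Set.range S ⊆ Q ∧ x = gramDet S}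

noncomputable def dirHeight {d : ℕ} (P : Set (Pt d)) (H : Submodule ℝ (Pt d)) : ℝ :=
  ⨆ p ∈ P, Metric.infDist p (H : Set (Pt d))

open Metric Submodule Finset in
lemma gramDet_eq_zero_of_not_li {d k : ℕ} {v : Fin k → Pt d}
    (h : ¬ LinearIndependent ℝ v) : gramDet v = 0 := by
  rw [Fintype.not_linearIndependent_iff] at h
  obtain ⟨g, hg, i, hi⟩ := h
  rw [gramDet, ← Matrix.exists_mulVec_eq_zero_iff]
  refine ⟨g, Function.ne_iff.2 ⟨i, hi⟩, ?_⟩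
  funext i'
  have : (Matrix.mulVec (Matrix.of fun i j => (inner ℝ (v i) (v j) : ℝ)) g) i'
      = inner ℝ (v i') (∑ j, g j • v j) := by
    simp only [Matrix.mulVec, dotProduct, Matrix.of_apply, inner_sum,
      real_inner_smul_right]
    exact Finset.sum_congr rfl fun x _ => by ring
  rw [this, hg, inner_zero_right]
  simp

open Metric Submodule in
lemma infDist_eq_norm_sub_proj {d : ℕ} (V : Submodule ℝ (Pt d)) (w : Pt d) :
    Metric.infDist w (V : Set (Pt d)) = ‖w - (orthogonalProjection V w : Pt d)‖ := by
  set p : Pt d := ↑(orthogonalProjection V w) with hp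
  apply le_antisymm
  · simpa [dist_eq_norm, hp] using
      Metric.infDist_le_dist_of_mem (SetLike.coe_mem (orthogonalProjection V w))
  · have hbound : ∀ y ∈ (V : Set (Pt d)), ‖w - p‖ ≤ dist w y := by
      intro y hy
      rw [dist_eq_norm]
      have h1 : w - p ∈ Vᗮ := sub_starProjection_mem_orthogonal w
      have h2 : p - y ∈ V := V.sub_mem (SetLike.coe_mem _) hy
      have horth : (inner ℝ (w - p) (p - y) : ℝ) = 0 :=
        real_inner_comm (w - p) (p - y) ▸ (Submodule.mem_orthogonal V (w - p)).1 h1 _ h2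
      have hpyth : ‖w - y‖ ^ 2 = ‖w - p‖ ^ 2 + ‖p - y‖ ^ 2 := by
        have h3 : w - y = (w - p) + (p - y) := by abel
        rw [h3, norm_add_sq_real, horth]; ring
      have h4 : ‖w - p‖ ^ 2 ≤ ‖w - y‖ ^ 2 := by nlinarith [sq_nonneg ‖p - y‖]
      exact le_of_pow_le_pow_left₀ (by norm_num) (norm_nonneg _) h4
    by_contra hlt
    push_neg at hlt
    obtain ⟨y, hy, hd⟩ := (Metric.infDist_lt_iff ⟨0, by simp⟩).1 hlt
    exact absurd (hbound y hy) (not_le.2 hd)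

lemma det_updateRow_single {m : ℕ} (A : Matrix (Fin (m+1)) (Fin (m+1)) ℝ) (j : Fin (m+1)) :
    (A.updateRow j (Pi.single j 1)).det = (A.submatrix j.succAbove j.succAbove).det := by
  rw [Matrix.det_succ_row _ j, Finset.sum_eq_single j]
  · have hsub : (A.updateRow j (Pi.single j 1)).submatrix j.succAbove j.succAbove
        = A.submatrix j.succAbove j.succAbove := by
      ext i l
      simp [Matrix.submatrix_apply, Matrix.updateRow_ne (Fin.succAbove_ne j i)]
    rw [hsub, Matrix.updateRow_self, Even.neg_one_pow ⟨(j : ℕ), rfl⟩]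
    simp
  · intro b _ hb
    simp [Matrix.updateRow_self, Pi.single_eq_of_ne hb]
  · simp

lemma not_li_update_of_mem_span {d m : ℕ} (S : Fin (m+1) → Pt d) (j : Fin (m+1)) {x : Pt d}
    (hx : x ∈ Submodule.span ℝ (Set.range (S ∘ j.succAbove))) :
    ¬ LinearIndependent ℝ (Function.update S j x) := by
  intro h
  have hmem := h.notMem_span_image (s := {j}ᶜ) (x := j) (by simp)
  apply hmem
  have himg : Function.update S j x '' {j}ᶜ = Set.range (S ∘ j.succAbove) := by
    rw [Set.range_comp, Fin.range_succAbove]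
    ext i
    simp only [Set.mem_image, Set.mem_compl_iff, Set.mem_singleton_iff]
    constructor
    · rintro ⟨a, ha, rfl⟩; exact ⟨a, ha, (Function.update_of_ne ha _ _).symm⟩
    · rintro ⟨a, ha, rfl⟩; exact ⟨a, ha, Function.update_of_ne ha _ _⟩
  rw [himg, Function.update_self]
  exact hx

open Metric Submodule in
lemma gramDet_update {d m : ℕ} (S : Fin (m+1) → Pt d) (j : Fin (m+1)) (w : Pt d) :
    gramDet (Function.update S j w)
      = gramDet (S ∘ j.succAbove)
        * (Metric.infDist w (Submodule.span ℝ (Set.range (S ∘ j.succAbove)) : Set (Pt d)))^2 := by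
  set u : Fin m → Pt d := S ∘ j.succAbove with hu
  set V : Submodule ℝ (Pt d) := Submodule.span ℝ (Set.range u) with hV
  have hcomp : ∀ w' : Pt d, Function.update S j w' ∘ j.succAbove = u := by
    intro w'; funext i
    exact Function.update_of_ne (Fin.succAbove_ne j i) _ _
  by_cases hli : LinearIndependent ℝ u
  · set p : Pt d := ↑(orthogonalProjection V w) with hpdef
    set q : Pt d := w - p with hq
    have hpV : p ∈ V := SetLike.coe_mem _
    have hqperp : q ∈ Vᗮ := sub_starProjection_mem_orthogonal w
    have hqV : ∀ y ∈ V, (inner ℝ y q : ℝ) = 0 := fun y hy =>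
      (Submodule.mem_orthogonal V q).1 hqperp y hy
    have hSV : ∀ i : Fin (m+1), i ≠ j → S i ∈ V := by
      intro i hij
      obtain ⟨l, hl⟩ := Fin.exists_succAbove_eq hij
      exact Submodule.subset_span ⟨l, congrArg S hl⟩
    set Gp : Matrix (Fin (m+1)) (Fin (m+1)) ℝ :=
      Matrix.of fun i l => (inner ℝ (Function.update S j p i) (Function.update S j p l) : ℝ)
      with hGp
    have hw : w = p + q := by rw [hq]; abel
    have key : (Matrix.of fun i l =>
          (inner ℝ (Function.update S j w i) (Function.update S j w l) : ℝ))
        = Matrix.updateRow Gp j (Gp j + ‖q‖^2 • (Pi.single j 1 : Fin (m+1) → ℝ)) := by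
      ext a b
      by_cases ha : a = j
      · by_cases hb : b = j
        · simp only [ha, hb, Matrix.of_apply, Matrix.updateRow_self, Pi.add_apply,
            Pi.smul_apply, Pi.single_eq_same, smul_eq_mul, mul_one, Function.update_self, hGp]
          rw [hw, real_inner_add_add_self, hqV p hpV, real_inner_self_eq_norm_sq, real_inner_self_eq_norm_sq]
          ring
        · have h0 : (inner ℝ q (S b) : ℝ) = 0 := real_inner_comm q (S b) ▸ hqV _ (hSV b hb)
          simp only [ha, Matrix.of_apply, Matrix.updateRow_self, Pi.add_apply, Pi.smul_apply,
            Pi.single_eq_of_ne hb, smul_eq_mul, mul_zero, add_zero, Function.update_self,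
            Function.update_of_ne hb, hGp]
          rw [hw, inner_add_left, h0, add_zero]
      · rw [Matrix.updateRow_ne ha]
        by_cases hb : b = j
        · have h0 : (inner ℝ (S a) q : ℝ) = 0 := hqV _ (hSV a ha)
          simp only [hb, Matrix.of_apply, Function.update_of_ne ha, Function.update_self, hGp]
          rw [hw, inner_add_right, h0, add_zero]
        · simp only [Matrix.of_apply, Function.update_of_ne ha, Function.update_of_ne hb, hGp]
    have hGp0 : Gp.det = 0 := gramDet_eq_zero_of_not_li (not_li_update_of_mem_span S j hpV)
    have hminor : (Gp.submatrix j.succAbove j.succAbove).det = gramDet u := by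
      rw [gramDet]
      congr 1
      ext i l
      simp only [Matrix.submatrix_apply, Matrix.of_apply, hGp, hu,
        Function.update_of_ne (Fin.succAbove_ne j i), Function.update_of_ne (Fin.succAbove_ne j l)]
      rfl
    rw [gramDet, key, Matrix.det_updateRow_add, Matrix.updateRow_eq_self, hGp0,
      Matrix.det_updateRow_smul, det_updateRow_single, hminor, infDist_eq_norm_sub_proj,
      ← hpdef, ← hq]
    ring
  · rw [gramDet_eq_zero_of_not_li hli, gramDet_eq_zero_of_not_li (fun h => by
      have := h.comp j.succAbove (Fin.succAbove_right_injective)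
      rw [hcomp] at this
      exact hli this)]
    ring

lemma gramDet_nonneg {d : ℕ} : ∀ {k : ℕ} (v : Fin k → Pt d), 0 ≤ gramDet v
  | 0, v => by simp [gramDet, Matrix.det_fin_zero]
  | (m+1), v => by
    have h := gramDet_update v 0 (v 0)
    rw [Function.update_eq_self] at h
    rw [h]
    exact mul_nonneg (gramDet_nonneg _) (sq_nonneg _)

open Metric in
lemma le_dirHeight {d : ℕ} {P : Set (Pt d)} (hP : P.Finite) {p : Pt d} (hp : p ∈ P)
    (H : Submodule ℝ (Pt d)) : Metric.infDist p (H : Set (Pt d)) ≤ dirHeight P H := by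
  have hbdd : BddAbove (Set.range fun x => ⨆ _ : x ∈ P, Metric.infDist x (H : Set (Pt d))) := by
    apply Set.Finite.bddAbove
    apply Set.Finite.subset
      (Set.Finite.insert 0 (hP.image fun x => Metric.infDist x (H : Set (Pt d))))
    rintro y ⟨x, rfl⟩
    show (⨆ _ : x ∈ P, Metric.infDist x (H : Set (Pt d))) ∈
      insert 0 ((fun x => Metric.infDist x (H : Set (Pt d))) '' P)
    by_cases hx : x ∈ P
    · exact Set.mem_insert_iff.2 (Or.inr ⟨x, hx,
        (ciSup_pos (f := fun _ : x ∈ P => Metric.infDist x (H : Set (Pt d))) hx).symm⟩)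
    · haveI : IsEmpty (x ∈ P) := ⟨hx⟩
      rw [Real.iSup_of_isEmpty]
      exact Set.mem_insert _ _
  calc Metric.infDist p (H : Set (Pt d)) = ⨆ _ : p ∈ P, Metric.infDist p (H : Set (Pt d)) :=
        (ciSup_pos (f := fun _ : p ∈ P => Metric.infDist p (H : Set (Pt d))) hp).symm
    _ ≤ dirHeight P H := le_ciSup hbdd p

lemma dirHeight_le {d : ℕ} {P : Set (Pt d)} (H : Submodule ℝ (Pt d)) {M : ℝ} (hM : 0 ≤ M)
    (h : ∀ p ∈ P, Metric.infDist p (H : Set (Pt d)) ≤ M) : dirHeight P H ≤ M := by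
  apply Real.iSup_le _ hM
  intro x
  exact Real.iSup_le (fun hx => h x hx) hM

lemma maxdet_set_finite {d k : ℕ} {Q : Set (Pt d)} (hQ : Q.Finite) :
    {x | ∃ S : Fin k → Pt d, Function.Injective S ∧ Set.range S ⊆ Q ∧ x = gramDet S}.Finite := by
  have h1 : {S : Fin k → Pt d | ∀ i, S i ∈ Q}.Finite := by
    have := Set.Finite.pi (fun _ : Fin k => hQ)
    apply this.subset
    intro S hS
    simp only [Set.mem_pi, Set.mem_univ]
    exact fun i _ => hS i
  apply (h1.image gramDet).subset
  rintro x ⟨S, _, hr, rfl⟩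
  exact ⟨S, fun i => hr ⟨i, rfl⟩, rfl⟩

lemma maxdet_nonneg {d k : ℕ} (Q : Set (Pt d)) : 0 ≤ maxdet k Q := by
  apply Real.sSup_nonneg
  rintro x ⟨S, _, _, rfl⟩
  exact gramDet_nonneg S

lemma le_maxdet {d k : ℕ} {Q : Set (Pt d)} (hQ : Q.Finite) {S : Fin k → Pt d}
    (hinj : Function.Injective S) (hr : Set.range S ⊆ Q) : gramDet S ≤ maxdet k Q :=
  le_csSup (maxdet_set_finite hQ).bddAbove ⟨S, hinj, hr, rfl⟩

open Metric Submodule in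
lemma replace_claim {d k : ℕ} {α : ℝ} (hα : 1 ≤ α)
    (c : Set (Pt d) → Set (Pt d))
    (hsub : ∀ P : Set (Pt d), P.Finite → c P ⊆ P)
    (hcore : ∀ P : Set (Pt d), P.Finite →
      ∀ H : Submodule ℝ (Pt d), Module.finrank ℝ H = k - 1 →
        dirHeight P H ≤ α * dirHeight (c P) H)
    {m : ℕ} (P : Fin m → Set (Pt d)) (hfin : ∀ i, (P i).Finite) :
    ∀ n, n ≤ k → ∀ S : Fin k → Pt d, Function.Injective S →
      (∀ i : Fin k, (i : ℕ) < k - n → S i ∈ ⋃ t, c (P t)) →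
      (∀ i : Fin k, k - n ≤ (i : ℕ) → S i ∈ ⋃ t, P t) →
      gramDet S ≤ α ^ (2 * n) * maxdet k (⋃ t, c (P t)) := by
  have hα0 : (0:ℝ) < α := lt_of_lt_of_le one_pos hα
  have hCfin : (⋃ t, c (P t)).Finite :=
    Set.finite_iUnion (fun t => (hfin t).subset (hsub _ (hfin t)))
  intro n
  induction n with
  | zero =>
    intro _ S hinj hC _
    have hr : Set.range S ⊆ ⋃ t, c (P t) := by
      rintro x ⟨i, rfl⟩
      exact hC i (by omega)
    simpa using le_maxdet hCfin hinj hr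
  | succ n IH =>
    intro hn S hinj hC hT
    obtain ⟨k', rfl⟩ : ∃ k', k = k' + 1 := ⟨k - 1, by omega⟩
    have hRHS0 : 0 ≤ α ^ (2 * (n+1)) * maxdet (k'+1) (⋃ t, c (P t)) :=
      mul_nonneg (pow_nonneg hα0.le _) (maxdet_nonneg _)
    by_cases hg : gramDet S ≤ 0
    · linarith
    push_neg at hg
    set j0 : Fin (k'+1) := ⟨k' + 1 - (n+1), by omega⟩ with hj0
    set u : Fin k' → Pt d := S ∘ j0.succAbove with hu
    set V : Submodule ℝ (Pt d) := Submodule.span ℝ (Set.range u) with hV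
    have hdecomp : gramDet S = gramDet u * (Metric.infDist (S j0) (V : Set (Pt d)))^2 := by
      conv_lhs => rw [← Function.update_eq_self j0 S]
      exact gramDet_update S j0 (S j0)
    have hGu : 0 < gramDet u := by
      rcases lt_or_ge 0 (gramDet u) with h | h
      · exact h
      · nlinarith [sq_nonneg (Metric.infDist (S j0) (V : Set (Pt d)))]
    have hd0 : 0 < Metric.infDist (S j0) (V : Set (Pt d)) := by
      rcases (Metric.infDist_nonneg (x := S j0) (s := (V : Set (Pt d)))).lt_or_eq with h | h
      · exact h
      · rw [hdecomp, ← h] at hg; simp at hg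
    have hli : LinearIndependent ℝ u := by
      by_contra h
      rw [gramDet_eq_zero_of_not_li h] at hGu
      exact lt_irrefl _ hGu
    have hrank : Module.finrank ℝ V = k' + 1 - 1 := by
      rw [hV, finrank_span_eq_card hli]
      simp
    have hSV : ∀ i : Fin (k'+1), i ≠ j0 → S i ∈ V := by
      intro i hij
      obtain ⟨l, hl⟩ := Fin.exists_succAbove_eq hij
      exact Submodule.subset_span ⟨l, congrArg S hl⟩
    obtain ⟨t, hSt⟩ := Set.mem_iUnion.1 (hT j0 (le_refl _))
    have h1 : Metric.infDist (S j0) (V : Set (Pt d)) ≤ dirHeight (P t) V :=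
      le_dirHeight (hfin t) hSt V
    have h2 := hcore (P t) (hfin t) V hrank
    rcases (c (P t)).eq_empty_or_nonempty with hcE | hcne
    · exfalso
      have h3 : dirHeight (c (P t)) V ≤ 0 := by
        rw [hcE]; exact dirHeight_le V le_rfl (by simp)
      nlinarith
    obtain ⟨q, hqmem, hqmax⟩ := Set.exists_max_image (c (P t))
      (fun p => Metric.infDist p (V : Set (Pt d))) ((hfin t).subset (hsub _ (hfin t))) hcne
    have h4 : dirHeight (c (P t)) V ≤ Metric.infDist q (V : Set (Pt d)) :=
      dirHeight_le V (Metric.infDist_nonneg) hqmax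
    have hchain : Metric.infDist (S j0) (V : Set (Pt d))
        ≤ α * Metric.infDist q (V : Set (Pt d)) := by
      calc Metric.infDist (S j0) (V : Set (Pt d)) ≤ dirHeight (P t) V := h1
        _ ≤ α * dirHeight (c (P t)) V := h2
        _ ≤ α * Metric.infDist q (V : Set (Pt d)) := by
            exact mul_le_mul_of_nonneg_left h4 hα0.le
    have hdq : 0 < Metric.infDist q (V : Set (Pt d)) := by nlinarith
    have hqnV : q ∉ V := fun h => by
      rw [Metric.infDist_zero_of_mem h] at hdq; exact lt_irrefl _ hdq
    set S' : Fin (k'+1) → Pt d := Function.update S j0 q with hS'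
    have hS'inj : Function.Injective S' := by
      intro a b hab
      by_cases ha : a = j0 <;> by_cases hb : b = j0
      · rw [ha, hb]
      · exfalso
        rw [hS'] at hab
        rw [ha, Function.update_self, Function.update_of_ne hb] at hab
        exact hqnV (hab ▸ hSV b hb)
      · exfalso
        rw [hS'] at hab
        rw [hb, Function.update_self, Function.update_of_ne ha] at hab
        exact hqnV (hab ▸ hSV a ha)
      · rw [hS', Function.update_of_ne ha, Function.update_of_ne hb] at hab
        exact hinj hab
    have hC' : ∀ i : Fin (k'+1), (i : ℕ) < k' + 1 - n → S' i ∈ ⋃ t, c (P t) := by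
      intro i hi
      by_cases hij : i = j0
      · rw [hij, hS', Function.update_self]
        exact Set.mem_iUnion.2 ⟨t, hqmem⟩
      · have hvne : (i : ℕ) ≠ k' + 1 - (n + 1) := fun h =>
          hij (Fin.ext (by rw [h, hj0]))
        rw [hS', Function.update_of_ne hij]
        exact hC i (by omega)
    have hT' : ∀ i : Fin (k'+1), k' + 1 - n ≤ (i : ℕ) → S' i ∈ ⋃ t, P t := by
      intro i hi
      have hij : i ≠ j0 := fun h => by
        rw [h, hj0] at hi
        simp only [hj0] at hi
        omega
      rw [hS', Function.update_of_ne hij]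
      exact hT i (by omega)
    have hdecomp' : gramDet S' = gramDet u * (Metric.infDist q (V : Set (Pt d)))^2 :=
      gramDet_update S j0 q
    have hIH := IH (by omega) S' hS'inj hC' hT'
    have hsq : (Metric.infDist (S j0) (V : Set (Pt d)))^2
        ≤ α^2 * (Metric.infDist q (V : Set (Pt d)))^2 := by nlinarith
    calc gramDet S = gramDet u * (Metric.infDist (S j0) (V : Set (Pt d)))^2 := hdecomp
      _ ≤ gramDet u * (α^2 * (Metric.infDist q (V : Set (Pt d)))^2) :=
          mul_le_mul_of_nonneg_left hsq hGu.le
      _ = α^2 * gramDet S' := by rw [hdecomp']; ring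
      _ ≤ α^2 * (α ^ (2 * n) * maxdet (k'+1) (⋃ t, c (P t))) :=
          mul_le_mul_of_nonneg_left hIH (by positivity)
      _ = α ^ (2 * (n+1)) * maxdet (k'+1) (⋃ t, c (P t)) := by ring

/-- Any mapping `c` that is an `α`-approximate core-set function for the
`k`-directional height is an `α^{2k}`-composable core-set for determinant
maximization. -/
theorem dirHeight_coreset_composable {d k : ℕ} (hk : 1 ≤ k) (α : ℝ) (hα : 1 ≤ α)
    (c : Set (Pt d) → Set (Pt d))
    (hsub : ∀ P : Set (Pt d), P.Finite → c P ⊆ P)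
    (hcore : ∀ P : Set (Pt d), P.Finite →
      ∀ H : Submodule ℝ (Pt d), Module.finrank ℝ H = k - 1 →
        dirHeight P H ≤ α * dirHeight (c P) H)
    {m : ℕ} (P : Fin m → Set (Pt d)) (hfin : ∀ i, (P i).Finite) :
    maxdet k (⋃ i, P i) ≤ α ^ (2 * k) * maxdet k (⋃ i, c (P i)) := by
  have hRHS0 : 0 ≤ α ^ (2 * k) * maxdet k (⋃ i, c (P i)) :=
    mul_nonneg (pow_nonneg (by linarith) _) (maxdet_nonneg _)
  rw [maxdet]
  apply Real.sSup_le _ hRHS0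
  rintro x ⟨S, hinj, hr, rfl⟩
  apply replace_claim hα c hsub hcore P hfin k le_rfl S hinj
  · intro i hi
    omega
  · intro i _
    exact hr ⟨i, rfl⟩
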